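/- Let G be a finite group and (ρ i)_{i ∈ ι} a complete set of inequivalent irreducible representations of G on spaces V i. Then the ℂ-algebra homomorphism from the group algebra ℂ[G] (the monoid algebra MonoidAlgebra ℂ G) to the product algebra ∏_{i ∈ ι} End_ℂ(V i), sending an element a = ∑_{s ∈ G} a(s)·s to the family ( ∑_{s ∈ G} a(s) • ρ i (s) )_{i ∈ ι}, is bijective, i.e. it is an isomorphism of ℂ-algebras. -/

import Mathlib

open CategoryTheory Finset

namespace WedderburnAux

open Representation Module

variable {G : Type} [Group G] [Fintype G]

noncomputable section
set_option linter.unusedSectionVars false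
set_option synthInstance.maxHeartbeats 800000
set_option maxHeartbeats 1600000

lemma finsupp_eq_sum_single (a : MonoidAlgebra ℂ G) :
    a = ∑ s : G, MonoidAlgebra.single s (a.coeff s) := by
  ext t
  rw [MonoidAlgebra.coeff_sum, Finset.sum_apply']
  rw [Finset.sum_eq_single t (fun b _ hb => by simp [MonoidAlgebra.coeff_single, Finsupp.single_apply, hb]) (by simp)]
  simp [MonoidAlgebra.coeff_single]

lemma asAlgebraHom_eq_sum (X : FDRep ℂ G) (a : MonoidAlgebra ℂ G) :
    asAlgebraHom X.ρ a = ∑ s : G, a.coeff s • X.ρ s := by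
  conv_lhs => rw [finsupp_eq_sum_single a]
  rw [map_sum]
  simp [asAlgebraHom_single]

lemma asAlgebraHom_conj {X Y : FDRep ℂ G} (e : X ≅ Y) (a : MonoidAlgebra ℂ G) :
    asAlgebraHom Y.ρ a = (FDRep.isoToLinearEquiv e).conj (asAlgebraHom X.ρ a) := by
  rw [asAlgebraHom_eq_sum, asAlgebraHom_eq_sum, map_sum]
  exact Finset.sum_congr rfl fun s _ => by
    rw [map_smul, ← FDRep.Iso.conj_ρ e s]

lemma asAlgebraHom_eq_zero_of_iso {X Y : FDRep ℂ G} (e : X ≅ Y) {a : MonoidAlgebra ℂ G}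
    (h : asAlgebraHom Y.ρ a = 0) : asAlgebraHom X.ρ a = 0 := by
  rw [asAlgebraHom_conj e.symm a, h, map_zero]

/-- Subrepresentation on an invariant submodule. -/
def subRep {V : Type} [AddCommGroup V] [Module ℂ V] (ρV : Representation ℂ G V)
    (p : Submodule ℂ V) (hp : ∀ g, ∀ x ∈ p, ρV g x ∈ p) : Representation ℂ G p where
  toFun g := (ρV g).restrict (hp g)
  map_one' := by ext x; simp
  map_mul' g h := by ext x; simp


lemma simple_of_invariant_subspaces (X : FDRep ℂ G) (h1 : ∃ x : X, x ≠ 0)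
    (h2 : ∀ p : Submodule ℂ X, (∀ g, ∀ x ∈ p, X.ρ g x ∈ p) → p = ⊥ ∨ p = ⊤) :
    Simple X := by
  constructor
  intro Y f hf
  constructor
  · intro hiso h0
    obtain ⟨x, hx⟩ := h1
    have : (𝟙 X : X ⟶ X) = 0 := by
      have h4 := IsIso.inv_hom_id f
      have h5 : inv f ≫ f = inv f ≫ 0 := congrArg (fun g => inv f ≫ g) h0
      rw [Limits.comp_zero] at h5
      rw [← h4, h5]
    apply hx
    have := congrArg Action.Hom.hom this
    rw [Action.zero_hom] at this
    calc x = (𝟙 X : X ⟶ X).hom x := rfl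
    _ = 0 := by rw [this]; rfl
  · intro hne
    have hker : LinearMap.ker f.hom.hom.hom = ⊥ := by
      have hKinv : ∀ g, ∀ x ∈ LinearMap.ker f.hom.hom.hom, Y.ρ g x ∈ LinearMap.ker f.hom.hom.hom := by
        intro g x hx
        have hc := congrArg (fun (φ : Y.V ⟶ X.V) => φ x) (f.comm g)
        simp only [LinearMap.mem_ker] at hx ⊢
        calc f.hom.hom.hom (Y.ρ g x) = X.ρ g (f.hom.hom.hom x) := hc
        _ = 0 := by rw [hx, map_zero]
      let K : FDRep ℂ G := FDRep.of (subRep Y.ρ (LinearMap.ker f.hom.hom.hom) hKinv)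
      let ι : K ⟶ Y := ⟨FGModuleCat.ofHom (LinearMap.ker f.hom.hom.hom).subtype, fun g => rfl⟩
      have hι : ι ≫ f = 0 := by
        apply Action.hom_ext
        ext x
        exact x.2
      have hι0 : ι = (0 : K ⟶ Y) := (cancel_mono f).mp (by rw [hι, Limits.zero_comp])
      rw [eq_bot_iff]
      intro x hx
      simp only [Submodule.mem_bot]
      have h3 := congrArg Action.Hom.hom hι0
      rw [Action.zero_hom] at h3
      calc x = (LinearMap.ker f.hom.hom.hom).subtype ⟨x, hx⟩ := rfl
      _ = 0 := by rw [show (LinearMap.ker f.hom.hom.hom).subtype = ι.hom.hom.hom from rfl, h3]; rfl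
    have hrinv : ∀ g, ∀ x ∈ LinearMap.range f.hom.hom.hom, X.ρ g x ∈ LinearMap.range f.hom.hom.hom := by
      rintro g x ⟨y, rfl⟩
      refine ⟨Y.ρ g y, ?_⟩
      exact congrArg (fun (φ : Y.V ⟶ X.V) => φ y) (f.comm g)
    have hrange : LinearMap.range f.hom.hom.hom = ⊤ := by
      rcases h2 (LinearMap.range f.hom.hom.hom) hrinv with h | h
      · exfalso
        apply hne
        apply Action.hom_ext
        ext y
        have : f.hom.hom.hom y ∈ LinearMap.range f.hom.hom.hom := ⟨y, rfl⟩
        rw [h] at this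
        simpa using this
      · exact h
    have hbij : Function.Bijective f.hom.hom.hom :=
      ⟨LinearMap.ker_eq_bot.mp hker, LinearMap.range_eq_top.mp hrange⟩
    let e := LinearEquiv.ofBijective f.hom.hom.hom hbij
    refine ⟨⟨⟨FGModuleCat.ofHom e.symm.toLinearMap, ?_⟩, ?_, ?_⟩⟩
    · intro g
      ext x
      show e.symm (X.ρ g x) = Y.ρ g (e.symm x)
      apply e.injective
      rw [e.apply_symm_apply]
      have hc : f.hom.hom.hom (Y.ρ g (e.symm x)) = X.ρ g (f.hom.hom.hom (e.symm x)) :=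
        congrArg (fun (φ : Y.V ⟶ X.V) => φ (e.symm x)) (f.comm g)
      calc X.ρ g x = X.ρ g (f.hom.hom.hom (e.symm x)) := by
            rw [show f.hom.hom.hom (e.symm x) = x from e.apply_symm_apply x]
      _ = f.hom.hom.hom (Y.ρ g (e.symm x)) := hc.symm
      _ = e (Y.ρ g (e.symm x)) := rfl
    · apply Action.hom_ext
      ext y
      exact e.symm_apply_apply y
    · apply Action.hom_ext
      ext x
      exact e.apply_symm_apply x


/-- Left regular representation of `G` on its group algebra. -/
def lreg : Representation ℂ G (MonoidAlgebra ℂ G) where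
  toFun g := LinearMap.mulLeft ℂ (MonoidAlgebra.of ℂ G g)
  map_one' := by ext x; simp
  map_mul' g h := by ext x; simp [mul_assoc]

lemma mul_eq_sum_smul (c x : MonoidAlgebra ℂ G) :
    c * x = ∑ g : G, c.coeff g • (MonoidAlgebra.of ℂ G g * x) := by
  conv_lhs => rw [finsupp_eq_sum_single c]
  rw [Finset.sum_mul]
  refine Finset.sum_congr rfl fun g _ => ?_
  rw [show MonoidAlgebra.single g (c.coeff g) = c.coeff g • MonoidAlgebra.of ℂ G g by
    simp [MonoidAlgebra.of_apply, Finsupp.smul_single], smul_mul_assoc]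

lemma injective_aux {ι : Type} [Fintype ι] (ρ : ι → FDRep ℂ G)
    (hcomplete : ∀ W : FDRep ℂ G, Simple W → ∃ i, Nonempty (W ≅ ρ i))
    {a : MonoidAlgebra ℂ G} (ha : ∀ i, asAlgebraHom (ρ i).ρ a = 0) : a = 0 := by
  classical
  haveI : NeZero ((Fintype.card G : ℂ)) :=
    ⟨Nat.cast_ne_zero.mpr Fintype.card_ne_zero⟩
  haveI : Module.Finite ℂ (MonoidAlgebra ℂ G) :=
    Module.Finite.equiv ((Finsupp.linearEquivFunOnFinite ℂ ℂ G).symm.trans (MonoidAlgebra.coeffLinearEquiv ℂ).symm)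
  haveI : IsSemisimpleRing (MonoidAlgebra ℂ G) := inferInstance
  -- every simple submodule of the group algebra is killed by `a`
  have key : ∀ S : Submodule (MonoidAlgebra ℂ G) (MonoidAlgebra ℂ G),
      IsSimpleModule (MonoidAlgebra ℂ G) S → ∀ x ∈ S, a * x = 0 := by
    intro S hS x hxS
    haveI := hS
    set M : Submodule ℂ (MonoidAlgebra ℂ G) := S.restrictScalars ℂ with hM
    have hMinv : ∀ g, ∀ y ∈ M, lreg g y ∈ M := by
      intro g y hy
      show MonoidAlgebra.of ℂ G g * y ∈ S
      simpa [smul_eq_mul] using S.smul_mem (MonoidAlgebra.of ℂ G g) hy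
    let W : FDRep ℂ G := FDRep.of (subRep lreg M hMinv)
    -- `W` is simple
    have hWsimple : Simple W := by
      apply simple_of_invariant_subspaces
      · obtain ⟨y, hyS, hy0⟩ := Submodule.exists_mem_ne_zero_of_ne_bot
          (isSimpleModule_iff_isAtom.mp hS).1
        exact ⟨⟨y, hyS⟩, fun h => hy0 (congrArg Subtype.val h)⟩
      · intro p hp
        -- the image of `p` in the group algebra
        set P' : Submodule ℂ (MonoidAlgebra ℂ G) := p.map M.subtype with hP'
        have hP'mul : ∀ c : MonoidAlgebra ℂ G, ∀ y ∈ P', c * y ∈ P' := by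
          intro c y hy
          rw [mul_eq_sum_smul c y]
          refine Submodule.sum_mem _ fun g _ => Submodule.smul_mem _ _ ?_
          obtain ⟨z, hz, rfl⟩ := hy
          have hinv := hp g z hz
          exact ⟨subRep lreg M hMinv g z, hinv, rfl⟩
        let q : Submodule (MonoidAlgebra ℂ G) (MonoidAlgebra ℂ G) :=
          { carrier := P'
            add_mem' := fun h1 h2 => P'.add_mem h1 h2
            zero_mem' := P'.zero_mem
            smul_mem' := fun c y hy => by
              simpa [smul_eq_mul] using hP'mul c y hy }
        have hqS : q ≤ S := by
          rintro y ⟨z, _, rfl⟩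
          exact z.2
        rcases ((isSimpleModule_iff_isAtom.mp hS).le_iff.mp hqS) with h | h
        · left
          rw [eq_bot_iff]
          intro z hz
          have : ((show M from z) : MonoidAlgebra ℂ G) ∈ q := ⟨z, hz, rfl⟩
          rw [h, Submodule.mem_bot] at this
          exact (Submodule.mem_bot ℂ).mpr (Subtype.ext this)
        · right
          rw [eq_top_iff]
          intro z _
          have : ((show M from z) : MonoidAlgebra ℂ G) ∈ q := by
            rw [h]; exact (show M from z).2
          obtain ⟨w, hw, hwz⟩ := this
          have : w = z := Subtype.ext hwz
          rwa [← this]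
    obtain ⟨i, ⟨e⟩⟩ := hcomplete W hWsimple
    have h0 : asAlgebraHom W.ρ a = 0 := asAlgebraHom_eq_zero_of_iso e (ha i)
    have h1 := LinearMap.congr_fun ((asAlgebraHom_eq_sum W a).symm.trans h0) (⟨x, hxS⟩ : M)
    have h2 : ∑ g : G, a.coeff g • (MonoidAlgebra.of ℂ G g * x) = (0 : MonoidAlgebra ℂ G) := by
      simp only [LinearMap.sum_apply, LinearMap.smul_apply] at h1
      have h3 := congrArg Subtype.val h1
      rw [Submodule.coe_sum] at h3
      exact h3
    rw [mul_eq_sum_smul a x, h2]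
  have hall : ∀ x : MonoidAlgebra ℂ G, a * x = 0 := by
    intro x
    have hx : x ∈ (⊤ : Submodule (MonoidAlgebra ℂ G) (MonoidAlgebra ℂ G)) := trivial
    rw [← IsSemisimpleModule.sSup_simples_eq_top (MonoidAlgebra ℂ G) (MonoidAlgebra ℂ G),
      sSup_eq_iSup'] at hx
    refine Submodule.iSup_induction (motive := fun y => a * y = 0) _ hx
      (fun S y hy => key S.1 S.2 y hy) (mul_zero a)
      (fun y z hy hz => by
        show a * (y + z) = 0
        rw [mul_add, show a * y = 0 from hy, show a * z = 0 from hz, add_zero])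
  simpa using hall 1


section Surjective

variable {ι : Type} [Fintype ι] (ρ : ι → FDRep ℂ G)

/-- The carrier of the direct sum `⨁ i, (V i)^{n i}`. -/
abbrev BigCarrier : Type := ∀ i, Fin (finrank ℂ (ρ i)) → ρ i

/-- The direct sum `⨁ i, (V i)^{n i}` as a plain representation. -/
def bigRep : Representation ℂ G (BigCarrier ρ) where
  toFun g :=
    { toFun := fun x i j => (ρ i).ρ g (x i j)
      map_add' := fun x y => by funext i j; simp
      map_smul' := fun c x => by funext i j; simp }
  map_one' := by ext x; simp
  map_mul' g h := by ext x; simp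

lemma surjective_aux (hirr : ∀ i, Simple (ρ i))
    (hinequiv : ∀ i j, i ≠ j → ¬ Nonempty (ρ i ≅ ρ j)) :
    Function.Surjective
      (fun (a : MonoidAlgebra ℂ G) => fun i : ι => asAlgebraHom (ρ i).ρ a) := by
  classical
  intro f
  haveI : NeZero ((Fintype.card G : ℂ)) :=
    ⟨Nat.cast_ne_zero.mpr Fintype.card_ne_zero⟩
  haveI := fun i => hirr i
  let n : ι → ℕ := fun i => finrank ℂ (ρ i)
  let B : ∀ i, Basis (Fin (n i)) ℂ (ρ i) := fun i => finBasis ℂ (ρ i)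
  letI : Module (MonoidAlgebra ℂ G) (BigCarrier ρ) :=
    Module.compHom (BigCarrier ρ) (asAlgebraHom (bigRep ρ)).toRingHom
  have smul_def : ∀ (b : MonoidAlgebra ℂ G) (x : BigCarrier ρ),
      b • x = asAlgebraHom (bigRep ρ) b x := fun _ _ => rfl
  -- componentwise description of the action
  have smul_apply : ∀ (b : MonoidAlgebra ℂ G) (x : BigCarrier ρ) (i : ι) (j : Fin (n i)),
      (b • x) i j = asAlgebraHom (ρ i).ρ b (x i j) := by
    intro b x i j
    rw [smul_def]
    rw [show asAlgebraHom (bigRep ρ) b = ∑ s : G, b.coeff s • bigRep ρ s by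
      conv_lhs => rw [finsupp_eq_sum_single b]
      rw [map_sum]; simp [asAlgebraHom_single]]
    rw [asAlgebraHom_eq_sum]
    simp only [LinearMap.sum_apply, LinearMap.smul_apply]
    rw [Finset.sum_apply, Finset.sum_apply]
    rfl
  -- the cyclic submodule generated by the basis vectors
  let L : MonoidAlgebra ℂ G →ₗ[MonoidAlgebra ℂ G] BigCarrier ρ :=
    { toFun := fun a => fun i j => asAlgebraHom (ρ i).ρ a (B i j)
      map_add' := fun a b => by
        funext i j
        show asAlgebraHom (ρ i).ρ (a + b) ((B i) j) = _
        rw [map_add]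
        rfl
      map_smul' := fun b a => by
        funext i j
        show asAlgebraHom (ρ i).ρ (b • a) ((B i) j)
          = (b • (fun i j => asAlgebraHom (ρ i).ρ a ((B i) j) : BigCarrier ρ)) i j
        rw [smul_eq_mul, map_mul, smul_apply]
        rfl }
  let U : Submodule (MonoidAlgebra ℂ G) (BigCarrier ρ) := LinearMap.range L
  obtain ⟨Q, hQ⟩ := MonoidAlgebra.Submodule.exists_isCompl U
  let π : BigCarrier ρ →ₗ[MonoidAlgebra ℂ G] BigCarrier ρ :=
    U.subtype.comp (U.linearProjOfIsCompl Q hQ)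
  have hπU : ∀ x : BigCarrier ρ, π x ∈ U := fun x => (U.linearProjOfIsCompl Q hQ x).2
  have hπid : ∀ x ∈ U, π x = x := by
    intro x hx
    show ((U.projectionOnto Q hQ) x : BigCarrier ρ) = x
    rw [Submodule.projectionOnto_apply_of_mem_left hQ hx]
  -- `π` commutes with the `ℂ`-action and the `G`-action
  have hsmulC : ∀ (c : ℂ) (x : BigCarrier ρ),
      (MonoidAlgebra.single (1 : G) c) • x = c • x := by
    intro c x
    rw [smul_def, asAlgebraHom_single]
    funext i j
    show (c • bigRep ρ 1) x i j = (c • x) i j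
    rw [map_one]
    rfl
  have hπC : ∀ (c : ℂ) (x : BigCarrier ρ), π (c • x) = c • π x := by
    intro c x
    rw [← hsmulC, map_smul, hsmulC]
  have hπG : ∀ (g : G) (x : BigCarrier ρ), π (bigRep ρ g x) = bigRep ρ g (π x) := by
    intro g x
    have h1 : ∀ y : BigCarrier ρ, bigRep ρ g y = (MonoidAlgebra.of ℂ G g) • y := by
      intro y; rw [smul_def, asAlgebraHom_of]
    rw [h1, map_smul, h1]
  -- the inclusions of the summands
  let e : ∀ (k : ι) (l : Fin (n k)), (ρ k : Type) →ₗ[ℂ] BigCarrier ρ := fun k l =>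
    (LinearMap.single ℂ (fun i => Fin (n i) → ρ i) k).comp
      (LinearMap.single ℂ (fun _ : Fin (n k) => ρ k) l)
  have he : ∀ (k l) (v : ρ k),
      e k l v = Pi.single (M := fun i => Fin (n i) → (ρ i : Type)) k (Pi.single l v) :=
    fun _ _ _ => rfl
  -- components of `π`
  let T : ∀ (i : ι) (j : Fin (n i)) (k : ι) (l : Fin (n k)), (ρ k : Type) →ₗ[ℂ] (ρ i : Type) :=
    fun i j k l =>
    { toFun := fun v => π (e k l v) i j
      map_add' := fun v w => by
        show π (e k l (v + w)) i j = π (e k l v) i j + π (e k l w) i j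
        rw [map_add, map_add]
        rfl
      map_smul' := fun c v => by
        show π (e k l (c • v)) i j = c • π (e k l v) i j
        rw [map_smul, hπC]
        rfl }
  -- the components are equivariant
  have hTcomm : ∀ (i j k l) (g : G) (v : ρ k),
      T i j k l ((ρ k).ρ g v) = (ρ i).ρ g (T i j k l v) := by
    intro i j k l g v
    have h1 : e k l ((ρ k).ρ g v) = bigRep ρ g (e k l v) := by
      funext i' j'
      rw [he, he]
      show _ = (ρ i').ρ g
        (Pi.single (M := fun i => Fin (n i) → (ρ i : Type)) k (Pi.single l v) i' j')
      rcases eq_or_ne i' k with rfl | hik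
      · simp only [Pi.single_eq_same]
        rcases eq_or_ne j' l with rfl | hjl
        · simp
        · simp [Pi.single_eq_of_ne hjl]
      · simp [Pi.single_eq_of_ne hik]
    show π (e k l ((ρ k).ρ g v)) i j = _
    rw [h1, hπG]
    rfl
  -- Schur: cross components vanish
  have hT0 : ∀ (i j k l), i ≠ k → T i j k l = 0 := by
    intro i j k l hik
    let φ : (ρ k) ⟶ (ρ i) := ⟨FGModuleCat.ofHom (T i j k l), fun g => by
      ext v
      show T i j k l ((ρ k).ρ g v) = (ρ i).ρ g (T i j k l v)
      exact hTcomm i j k l g v⟩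
    have hsub : Subsingleton ((ρ k) ⟶ (ρ i)) := by
      rw [← Module.finrank_zero_iff (R := ℂ)]
      rw [FDRep.finrank_hom_simple_simple (ρ k) (ρ i), if_neg (hinequiv k i (Ne.symm hik))]
    have hφ : φ = 0 := Subsingleton.elim _ _
    have h2 := congrArg (fun ψ : (ρ k) ⟶ (ρ i) => ψ.hom.hom.hom) hφ
    exact h2
  -- Schur: diagonal components are scalars
  have hTc : ∀ (i : ι) (j : Fin (n i)) (l : Fin (n i)), ∃ c : ℂ, ∀ v : ρ i,
      T i j i l v = c • v := by
    intro i j l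
    let φ : (ρ i) ⟶ (ρ i) := ⟨FGModuleCat.ofHom (T i j i l), fun g => by
      ext v
      show T i j i l ((ρ i).ρ g v) = (ρ i).ρ g (T i j i l v)
      exact hTcomm i j i l g v⟩
    obtain ⟨c, hc⟩ := CategoryTheory.endomorphism_simple_eq_smul_id ℂ φ
    refine ⟨c, fun v => ?_⟩
    have h3 := congrArg (fun ψ : (ρ i) ⟶ (ρ i) => ψ.hom.hom.hom v) hc
    calc T i j i l v = φ.hom.hom.hom v := rfl
    _ = (c • (𝟙 (ρ i) : ρ i ⟶ ρ i)).hom.hom.hom v := h3.symm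
    _ = c • v := rfl
  choose c hc using hTc
  -- decomposition of `π x` into components
  have hdecomp : ∀ (x : BigCarrier ρ) (i : ι) (j : Fin (n i)),
      π x i j = ∑ l : Fin (n i), T i j i l (x i l) := by
    intro x i j
    have hx : x = ∑ k : ι, ∑ l : Fin (n k), e k l (x k l) := by
      have h1 : ∀ k : ι, ∑ l : Fin (n k), e k l (x k l)
          = Pi.single (M := fun i => Fin (n i) → (ρ i : Type)) k (x k) := by
        intro k
        calc ∑ l : Fin (n k), e k l (x k l)
            = ∑ l : Fin (n k), (LinearMap.single ℂ (fun i => Fin (n i) → ρ i) k)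
              (Pi.single l (x k l)) := rfl
        _ = (LinearMap.single ℂ (fun i => Fin (n i) → ρ i) k)
              (∑ l : Fin (n k), Pi.single l (x k l)) := (map_sum _ _ _).symm
        _ = Pi.single (M := fun i => Fin (n i) → (ρ i : Type)) k (x k) := by
              rw [Finset.univ_sum_single]
              rfl
      rw [Finset.sum_congr rfl fun k _ => h1 k, Finset.univ_sum_single]
    have h2 : π x i j = ∑ k : ι, ∑ l : Fin (n k), T i j k l (x k l) := by
      conv_lhs => rw [hx]
      rw [map_sum]
      rw [Finset.sum_apply, Finset.sum_apply]
      refine Finset.sum_congr rfl fun k _ => ?_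
      rw [map_sum, Finset.sum_apply, Finset.sum_apply]
      rfl
    rw [h2]
    rw [Finset.sum_eq_single_of_mem i (Finset.mem_univ i)]
    intro k _ hki
    refine Finset.sum_eq_zero fun l _ => ?_
    rw [hT0 i j k l (Ne.symm hki)]
    rfl
  -- the tuple of basis vectors lies in `U`
  let v : BigCarrier ρ := fun i j => B i j
  have hv : v ∈ U := ⟨1, by
    funext i j
    show asAlgebraHom (ρ i).ρ 1 ((B i) j) = (B i) j
    rw [map_one]
    rfl⟩
  have hπv : π v = v := hπid v hv
  have hvc : ∀ (i : ι) (j : Fin (n i)), ∑ l : Fin (n i), c i j l • ((B i) l : ρ i) = (B i) j := by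
    intro i j
    have h3 := congrFun (congrFun hπv i) j
    rw [hdecomp] at h3
    calc ∑ l : Fin (n i), c i j l • ((B i) l : ρ i)
        = ∑ l : Fin (n i), T i j i l (v i l) := by
          refine Finset.sum_congr rfl fun l _ => ?_
          rw [hc i j l]
    _ = (B i) j := h3
  -- the tuple of images of basis vectors is fixed by `π`, hence lies in `U`
  let x : BigCarrier ρ := fun i j => f i ((B i) j)
  have hπx : π x = x := by
    funext i j
    rw [hdecomp]
    calc ∑ l : Fin (n i), T i j i l (x i l)
        = ∑ l : Fin (n i), c i j l • f i ((B i) l) := by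
          refine Finset.sum_congr rfl fun l _ => ?_
          rw [hc i j l]
    _ = f i (∑ l : Fin (n i), c i j l • ((B i) l : ρ i)) := by
          rw [map_sum]
          exact Finset.sum_congr rfl fun l _ => (map_smul (f i) _ _).symm
    _ = f i ((B i) j) := by rw [hvc]
  have hxU : x ∈ U := hπx ▸ hπU x
  obtain ⟨a, ha⟩ := hxU
  refine ⟨a, funext fun i => ?_⟩
  show asAlgebraHom (ρ i).ρ a = f i
  refine (B i).ext fun j => ?_
  exact congrFun (congrFun ha i) j

end Surjective

end

end WedderburnAux

/-- **Wedderburn decomposition of the group algebra.**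
If `(ρ i)_{i : ι}` is a complete set of inequivalent irreducible finite-dimensional complex
representations of a finite group `G`, then the `ℂ`-algebra homomorphism
`ℂ[G] → ∏ i, End ℂ (V i)` sending `a = ∑ s, a s • s` to `(∑ s, a s • ρ i s)_i` is bijective. -/
theorem groupAlgebra_to_matrix_algebras_bijective
    {G : Type} [Group G] [Fintype G] {ι : Type} [Fintype ι]
    (ρ : ι → FDRep ℂ G)
    (hirr : ∀ i, Simple (ρ i))
    (hinequiv : ∀ i j, i ≠ j → ¬ Nonempty (ρ i ≅ ρ j))
    (hcomplete : ∀ W : FDRep ℂ G, Simple W → ∃ i, Nonempty (W ≅ ρ i)) :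
    Function.Bijective
      (fun (a : MonoidAlgebra ℂ G) => fun i : ι => ∑ s, a.coeff s • (ρ i).ρ s) := by
  have hmap : (fun (a : MonoidAlgebra ℂ G) => fun i : ι => ∑ s, a.coeff s • (ρ i).ρ s)
      = fun a => fun i => Representation.asAlgebraHom (ρ i).ρ a := by
    funext a i
    rw [WedderburnAux.asAlgebraHom_eq_sum]
  rw [hmap]
  constructor
  · intro a b hab
    have h1 : ∀ i, Representation.asAlgebraHom (ρ i).ρ (a - b) = 0 := by
      intro i
      rw [map_sub, sub_eq_zero]
      exact congrFun hab i
    exact sub_eq_zero.mp (WedderburnAux.injective_aux ρ hcomplete h1)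
  · exact WedderburnAux.surjective_aux ρ hirr hinequiv
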